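/- Let a, b be positive integers with b > 1. The smallest integer t such that a ≤ (t_{(b−1)})^{+1}_{+1} is t = (a_{(b)})^{−1}_{−1}. -/

import Mathlib

/-- The value of a candidate `i`-binomial expansion with list of top entries `L`:
`C(L[0], i) + C(L[1], i-1) + ...`. -/
def expValue (i : ℕ) (L : List ℕ) : ℕ :=
  ∑ k ∈ Finset.range L.length, (L.getD k 0).choose (i - k)

/-- `L = [n_i, n_{i-1}, ..., n_j]` is the `i`-binomial expansion of `n`:
`n = C(n_i,i) + C(n_{i-1},i-1) + ... + C(n_j,j)` with
`n_i > n_{i-1} > ... > n_j ≥ j ≥ 1`.  Here `j = i + 1 - L.length`. -/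
def IsBinExp (n i : ℕ) (L : List ℕ) : Prop :=
  L ≠ [] ∧ L.length ≤ i ∧ L.Chain' (· > ·) ∧
    i + 1 - L.length ≤ L.getLast! ∧ expValue i L = n

/-- `(n_{(i)})^{+1}_{+1}`: each binomial `C(m,k)` of the expansion replaced by `C(m+1,k+1)`. -/
def expShiftUp (i : ℕ) (L : List ℕ) : ℕ :=
  ∑ k ∈ Finset.range L.length, (L.getD k 0 + 1).choose (i - k + 1)

/-- `(n_{(i)})^{-1}_{-1}`: each binomial `C(m,k)` of the expansion replaced by `C(m-1,k-1)`. -/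
def expShiftDown (i : ℕ) (L : List ℕ) : ℕ :=
  ∑ k ∈ Finset.range L.length, (L.getD k 0 - 1).choose (i - k - 1)

/-- Macaulay's condition: `h` (indexed from degree 0) is an O-sequence iff `h_0 = 1` and
`h_{d+1} ≤ ((h_d)_{(d)})^{+1}_{+1}` for all relevant `d ≥ 1`. -/
def OSeq (h : List ℕ) : Prop :=
  h.getD 0 0 = 1 ∧ ∀ d, 1 ≤ d → d + 1 < h.length →
    ∀ L, IsBinExp (h.getD d 0) d L → h.getD (d + 1) 0 ≤ expShiftUp d L

/-- First difference `Δv = (v_0, v_1 - v_0, v_2 - v_1, ...)`. -/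
def firstDiff (v : List ℕ) : List ℕ := List.zipWith (· - ·) v (0 :: v)

/-- `N(r,d) = C(r-1+d, d)`, the dimension of the degree-`d` part of a polynomial
ring in `r` variables. -/
def N (r d : ℕ) : ℕ := (r - 1 + d).choose d

namespace BGaux

inductive Valid : ℕ → List ℕ → Prop
  | nil (i : ℕ) : Valid i []
  | cons (i l : ℕ) (L : List ℕ) : i + 1 ≤ l → (∀ x ∈ L.head?, x < l) →
      Valid i L → Valid (i + 1) (l :: L)

lemma Valid.length_le {i : ℕ} {L : List ℕ} (h : Valid i L) : L.length ≤ i := by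
  induction h with
  | nil => simp
  | cons i l L h1 h2 h3 ih => simpa using Nat.succ_le_succ ih

lemma Valid.head_le {i x : ℕ} {T : List ℕ} (h : Valid i (x :: T)) : i ≤ x := by
  cases h; omega

lemma Valid.eq_nil {L : List ℕ} (h : Valid 0 L) : L = [] := by
  cases h; rfl

lemma expValue_nil (i : ℕ) : expValue i [] = 0 := by simp [expValue]
lemma expShiftDown_nil (i : ℕ) : expShiftDown i [] = 0 := by simp [expShiftDown]
lemma expShiftUp_nil (i : ℕ) : expShiftUp i [] = 0 := by simp [expShiftUp]

lemma expValue_cons (i l : ℕ) (L : List ℕ) :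
    expValue i (l :: L) = l.choose i + expValue (i - 1) L := by
  rw [expValue, expValue, List.length_cons, Finset.sum_range_succ']
  simp only [List.getD_cons_succ, List.getD_cons_zero, Nat.sub_zero]
  rw [Nat.add_comm]
  congr 1
  refine Finset.sum_congr rfl fun x _ => ?_
  congr 1
  omega

lemma expShiftDown_cons (i l : ℕ) (L : List ℕ) :
    expShiftDown i (l :: L) = (l - 1).choose (i - 1) + expShiftDown (i - 1) L := by
  rw [expShiftDown, expShiftDown, List.length_cons, Finset.sum_range_succ']
  simp only [List.getD_cons_succ, List.getD_cons_zero, Nat.sub_zero]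
  rw [Nat.add_comm]
  congr 1
  refine Finset.sum_congr rfl fun x _ => ?_
  congr 1
  omega

lemma expShiftUp_cons (i l : ℕ) (L : List ℕ) :
    expShiftUp i (l :: L) = (l + 1).choose (i + 1) + expShiftUp (i - 1) L := by
  rw [expShiftUp, expShiftUp, List.length_cons, Finset.sum_range_succ']
  simp only [List.getD_cons_succ, List.getD_cons_zero, Nat.sub_zero]
  rw [Nat.add_comm]
  congr 1
  refine Finset.sum_congr rfl fun x _ => ?_
  congr 1
  omega

end BGaux

namespace BGaux

lemma maxval {i : ℕ} {L : List ℕ} (h : Valid i L) :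
    ∀ c, (∀ x ∈ L.head?, x < c) → i ≤ c → expValue i L < c.choose i := by
  induction h with
  | nil i =>
    intro c _ hic
    simpa [expValue_nil] using Nat.choose_pos hic
  | cons i l L h1 h2 h3 ih =>
    intro c hhd hic
    have hlc : l < c := hhd l rfl
    have hIH := ih l h2 (by omega)
    rw [expValue_cons]
    have hp : (l + 1).choose (i + 1) = l.choose i + l.choose (i + 1) :=
      Nat.choose_succ_succ' l i
    have hmono : (l + 1).choose (i + 1) ≤ c.choose (i + 1) :=
      Nat.choose_le_choose _ (by omega)
    simp only [Nat.add_sub_cancel]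
    omega

lemma downmax {i : ℕ} {L : List ℕ} (h : Valid i L) :
    ∀ c, (∀ x ∈ L.head?, x < c) → i ≤ c → expShiftDown i L ≤ (c - 1).choose (i - 1) := by
  induction h with
  | nil i =>
    intro c _ _
    simp [expShiftDown_nil]
  | cons i l L h1 h2 h3 ih =>
    intro c hhd hic
    have hlc : l < c := hhd l rfl
    rw [expShiftDown_cons]
    simp only [Nat.add_sub_cancel]
    rcases Nat.eq_zero_or_pos i with rfl | hi
    · have hL : L = [] := h3.eq_nil
      subst hL
      simp [expShiftDown_nil, Nat.choose_zero_right]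
    · obtain ⟨i', rfl⟩ : ∃ i', i = i' + 1 := ⟨i - 1, by omega⟩
      have hIH := ih l h2 (by omega)
      obtain ⟨l', rfl⟩ : ∃ l', l = l' + 1 := ⟨l - 1, by omega⟩
      have hp : (l' + 1).choose (i' + 1) = l'.choose i' + l'.choose (i' + 1) :=
        Nat.choose_succ_succ' l' i'
      have hmono : (l' + 1).choose (i' + 1) ≤ (c - 1).choose (i' + 1) :=
        Nat.choose_le_choose _ (by omega)
      simp only [Nat.add_sub_cancel] at hIH ⊢
      omega

lemma down_mono : ∀ (L M : List ℕ) (i : ℕ), Valid i L → Valid i M →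
    expValue i L ≤ expValue i M → expShiftDown i L ≤ expShiftDown i M := by
  intro L
  induction L with
  | nil => intro M i _ _ _; simp [expShiftDown_nil]
  | cons l L' ih =>
    intro M i hL hM hval
    obtain ⟨i', rfl⟩ : ∃ i', i = i' + 1 := by
      cases hL with
      | cons j _ _ _ _ _ => exact ⟨j, rfl⟩
    have hl : i' + 1 ≤ l := hL.head_le
    cases M with
    | nil =>
      exfalso
      have : 0 < l.choose (i' + 1) := Nat.choose_pos (by omega)
      rw [expValue_cons, expValue_nil] at hval
      omega
    | cons m M' =>
      have hm : i' + 1 ≤ m := hM.head_le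
      rcases lt_trichotomy l m with hlt | heq | hgt
      · -- l < m : bound down L by downmax, compare with first term of down M
        have h1 : expShiftDown (i' + 1) (l :: L') ≤ l.choose i' := by
          have := downmax hL (l + 1) (by intro x hx; simp at hx; omega) (by omega)
          simpa using this
        have h2 : l.choose i' ≤ (m - 1).choose i' := Nat.choose_le_choose _ (by omega)
        rw [expShiftDown_cons]
        rw [expShiftDown_cons] at h1 ⊢
        simp only [Nat.add_sub_cancel] at h1 ⊢
        have : (m - 1).choose i' ≤ (m - 1).choose i' + expShiftDown i' M' := Nat.le_add_right _ _
        omega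
      · -- l = m : cancel heads, recurse
        subst heq
        rw [expValue_cons, expValue_cons] at hval
        rw [expShiftDown_cons, expShiftDown_cons]
        simp only [Nat.add_sub_cancel] at hval ⊢
        have hL' : Valid i' L' := by cases hL; assumption
        have hM' : Valid i' M' := by cases hM; assumption
        have := ih M' i' hL' hM' (by omega)
        omega
      · -- l > m : value M < C(m+1, i+1) ≤ C(l, i+1) ≤ value L, contradiction
        exfalso
        have h1 : expValue (i' + 1) (m :: M') < (m + 1).choose (i' + 1) :=
          maxval hM (m + 1) (by intro x hx; simp at hx; omega) (by omega)
        have h2 : (m + 1).choose (i' + 1) ≤ l.choose (i' + 1) :=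
          Nat.choose_le_choose _ (by omega)
        rw [expValue_cons] at hval
        omega

end BGaux

namespace BGaux

lemma getLast!_cons_cons (a b : ℕ) (l : List ℕ) :
    (a :: b :: l).getLast! = (b :: l).getLast! := by
  rw [List.getLast!_cons_eq_getLastD, List.getLast!_cons_eq_getLastD, List.getLastD_cons]

lemma valid_of_chain : ∀ (L : List ℕ) (i : ℕ), L.Chain' (· > ·) → L.length ≤ i →
    i + 1 - L.length ≤ L.getLast! → L ≠ [] → Valid i L := by
  intro L
  induction L with
  | nil => intro i _ _ _ h; exact absurd rfl h
  | cons x T ih =>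
    intro i hch hlen hlast _
    cases T with
    | nil =>
      obtain ⟨i', rfl⟩ : ∃ i', i = i' + 1 := ⟨i - 1, by simp only [List.length_cons] at hlen; omega⟩
      have hx : i' + 1 ≤ x := by
        simpa [List.getLast!_cons_eq_getLastD] using hlast
      exact Valid.cons i' x [] hx (by simp) (Valid.nil i')
    | cons y T' =>
      obtain ⟨i', rfl⟩ : ∃ i', i = i' + 1 := ⟨i - 1, by simp only [List.length_cons] at hlen; omega⟩
      have hch' : (y :: T').Chain' (· > ·) := hch.tail
      have hxy : y < x := by
        rcases List.isChain_cons_cons.mp hch with ⟨h, _⟩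
        exact h
      have hlast' : i' + 1 - (y :: T').length ≤ (y :: T').getLast! := by
        rw [getLast!_cons_cons] at hlast
        simp only [List.length_cons] at hlast ⊢
        omega
      have hV : Valid i' (y :: T') := ih i' hch' (by simp at hlen ⊢; omega) hlast' (by simp)
      have hy : i' ≤ y := hV.head_le
      exact Valid.cons i' x (y :: T') (by omega)
        (by intro z hz; simp at hz; omega) hV

lemma Valid.map_succ {i : ℕ} {L : List ℕ} (h : Valid i L) :
    Valid (i + 1) (L.map (· + 1)) := by
  induction h with
  | nil i => exact Valid.nil _
  | cons i l L h1 h2 h3 ih =>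
    refine Valid.cons (i + 1) (l + 1) _ (by omega) ?_ ih
    intro x hx
    rw [List.head?_map] at hx
    simp only [Option.mem_def, Option.map_eq_some_iff] at hx
    obtain ⟨y, hy, rfl⟩ := hx
    have := h2 y hy
    omega

lemma Valid.map_succ_append {i : ℕ} {L : List ℕ} (h : Valid i L) :
    Valid (i + 1) (L.map (· + 1) ++ [i + 1 - L.length]) := by
  induction h with
  | nil i =>
    simp only [List.map_nil, List.nil_append, List.length_nil, Nat.sub_zero]
    exact Valid.cons i (i + 1) [] le_rfl (by simp) (Valid.nil i)
  | cons i l L h1 h2 h3 ih =>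
    have hlen : L.length ≤ i := h3.length_le
    have he : i + 1 + 1 - (l :: L).length = i + 1 - L.length := by
      simp only [List.length_cons]; omega
    rw [List.map_cons, List.cons_append, he]
    refine Valid.cons (i + 1) (l + 1) _ (by omega) ?_ ih
    intro x hx
    cases L with
    | nil =>
      simp only [List.map_nil, List.nil_append, List.head?_cons, Option.mem_def,
        Option.some_inj, List.length_nil, Nat.sub_zero] at hx
      omega
    | cons y T =>
      simp only [List.map_cons, List.cons_append, List.head?_cons, Option.mem_def,
        Option.some_inj] at hx
      have := h2 y rfl
      omega

lemma expValue_map_succ : ∀ (L : List ℕ) (i : ℕ), L.length ≤ i + 1 →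
    expValue (i + 1) (L.map (· + 1)) = expShiftUp i L := by
  intro L
  induction L with
  | nil => intro i _; simp [expValue_nil, expShiftUp_nil]
  | cons l L' ih =>
    intro i hlen
    rw [List.map_cons, expValue_cons, expShiftUp_cons]
    simp only [Nat.add_sub_cancel]
    rcases Nat.eq_zero_or_pos i with rfl | hi
    · have : L' = [] := by simp only [List.length_cons] at hlen; exact List.length_eq_zero_iff.mp (by omega)
      subst this
      simp [expValue_nil, expShiftUp_nil]
    · obtain ⟨i', rfl⟩ : ∃ i', i = i' + 1 := ⟨i - 1, by omega⟩
      rw [ih i' (by simp only [List.length_cons] at hlen; omega)]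
      simp

lemma expShiftDown_map_succ : ∀ (L : List ℕ) (i : ℕ), L.length ≤ i + 1 →
    expShiftDown (i + 1) (L.map (· + 1)) = expValue i L := by
  intro L
  induction L with
  | nil => intro i _; simp [expValue_nil, expShiftDown_nil]
  | cons l L' ih =>
    intro i hlen
    rw [List.map_cons, expShiftDown_cons, expValue_cons]
    simp only [Nat.add_sub_cancel]
    rcases Nat.eq_zero_or_pos i with rfl | hi
    · have : L' = [] := by simp only [List.length_cons] at hlen; exact List.length_eq_zero_iff.mp (by omega)
      subst this
      simp [expValue_nil, expShiftDown_nil]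
    · obtain ⟨i', rfl⟩ : ∃ i', i = i' + 1 := ⟨i - 1, by omega⟩
      rw [ih i' (by simp only [List.length_cons] at hlen; omega)]
      simp

lemma expValue_append (i x : ℕ) (L : List ℕ) :
    expValue i (L ++ [x]) = expValue i L + x.choose (i - L.length) := by
  rw [expValue, expValue, List.length_append, List.length_singleton,
    Finset.sum_range_succ]
  congr 1
  · refine Finset.sum_congr rfl fun k hk => ?_
    rw [List.getD_append _ _ _ _ (Finset.mem_range.mp hk)]
  · rw [List.getD_append_right _ _ _ _ le_rfl, Nat.sub_self]
    rfl

lemma expShiftDown_append (i x : ℕ) (L : List ℕ) :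
    expShiftDown i (L ++ [x]) = expShiftDown i L + (x - 1).choose (i - L.length - 1) := by
  rw [expShiftDown, expShiftDown, List.length_append, List.length_singleton,
    Finset.sum_range_succ]
  congr 1
  · refine Finset.sum_congr rfl fun k hk => ?_
    rw [List.getD_append _ _ _ _ (Finset.mem_range.mp hk)]
  · rw [List.getD_append_right _ _ _ _ le_rfl, Nat.sub_self]
    rfl

end BGaux

namespace BGaux

lemma choose_lower : ∀ (i n : ℕ), 1 ≤ i → n + 1 ≤ (n + i).choose i := by
  intro i
  induction i with
  | zero => intro n h; omega
  | succ i ih =>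
    intro n _
    rcases Nat.eq_zero_or_pos i with rfl | hi
    · simp [Nat.choose_one_right]
    · have h1 := ih n hi
      have h2 : (n + (i + 1)).choose (i + 1) =
          (n + i).choose i + (n + i).choose (i + 1) := by
        have : n + (i + 1) = (n + i) + 1 := by omega
        rw [this, Nat.choose_succ_succ' (n + i) i]
      omega

lemma exists_expansion : ∀ (i n : ℕ), 1 ≤ i → 1 ≤ n → ∃ L, IsBinExp n i L := by
  intro i
  induction i with
  | zero => intro n h; omega
  | succ i ih =>
    intro n _ hn
    set P : ℕ → Prop := fun m => Nat.choose m (i + 1) ≤ n with hP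
    have hPdec : DecidablePred P := fun m => inferInstanceAs (Decidable (_ ≤ _))
    set m := Nat.findGreatest P (n + i + 1) with hm
    have hPi : P (i + 1) := by simp [hP, Nat.choose_self]; omega
    have hbound : i + 1 ≤ n + i + 1 := by omega
    have hm_ge : i + 1 ≤ m := Nat.le_findGreatest hbound hPi
    have hmP : P m := Nat.findGreatest_spec hbound hPi
    have hmax : n < (m + 1).choose (i + 1) := by
      have hmub : m ≤ n + i + 1 := Nat.findGreatest_le _
      have hnot : ¬ P (n + i + 1) := by
        have := choose_lower (i + 1) n (by omega)
        simp only [hP]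
        have heq : n + (i + 1) = n + i + 1 := by omega
        rw [heq] at this
        omega
      have hlt : m < n + i + 1 := lt_of_le_of_ne hmub (fun h => hnot (h ▸ hmP))
      have := Nat.findGreatest_is_greatest (P := P) (n := n + i + 1)
        (k := m + 1) (by omega) (by omega)
      simp only [hP, not_le] at this
      exact this
    by_cases h0 : n - m.choose (i + 1) = 0
    · refine ⟨[m], by simp, by simp, List.isChain_singleton m, ?_, ?_⟩
      · simp [List.getLast!_cons_eq_getLastD]; omega
      · rw [expValue_cons, expValue_nil]
        simp only [hP] at hmP
        omega
    · have hi1 : 1 ≤ i := by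
        by_contra hc
        have : i = 0 := by omega
        subst this
        simp only [hP] at hmP hmax
        norm_num [Nat.choose_one_right] at hmP hmax h0
        omega
      obtain ⟨L', hL'⟩ := ih (n - m.choose (i + 1)) hi1 (by omega)
      obtain ⟨hne, hlen, hchain, hlast, hval⟩ := hL'
      have hsplit : (m + 1).choose (i + 1) = m.choose i + m.choose (i + 1) :=
        Nat.choose_succ_succ' m i
      have hhead : ∀ x ∈ L'.head?, x < m := by
        intro x hx
        obtain ⟨T, rfl⟩ : ∃ T, L' = x :: T := by
          cases L' with
          | nil => simp at hx
          | cons a T => simp only [List.head?_cons, Option.mem_def, Option.some_inj] at hx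
                        exact ⟨T, by rw [hx]⟩
        rw [expValue_cons] at hval
        by_contra hxm
        push_neg at hxm
        have := Nat.choose_le_choose i hxm
        omega
      refine ⟨m :: L', by simp, ?_, ?_, ?_, ?_⟩
      · simp only [List.length_cons]; omega
      · exact List.isChain_cons.mpr ⟨fun y hy => hhead y hy, hchain⟩
      · obtain ⟨y, T, rfl⟩ : ∃ y T, L' = y :: T := by
          cases L' with
          | nil => exact absurd rfl hne
          | cons a T => exact ⟨a, T, rfl⟩
        rw [getLast!_cons_cons]
        simp only [List.length_cons] at hlast ⊢
        omega
      · rw [expValue_cons]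
        simp only [Nat.add_sub_cancel]
        rw [hval]
        simp only [hP] at hmP
        omega

end BGaux


/-- Bigatti–Geramita: for positive integers `a, b` with `b > 1`,
the smallest integer `t` with `a ≤ (t_{(b-1)})^{+1}_{+1}` is `t = (a_{(b)})^{-1}_{-1}`. -/
theorem bigatti_geramita (a b : ℕ) (ha : 0 < a) (hb : 1 < b)
    (La : List ℕ) (hLa : IsBinExp a b La) :
    IsLeast {t : ℕ | ∃ Lt : List ℕ, IsBinExp t (b - 1) Lt ∧ a ≤ expShiftUp (b - 1) Lt}
      (expShiftDown b La) := by
  have hb1 : b - 1 + 1 = b := by omega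
  obtain ⟨hane, halen, hachain, halast, haval⟩ := hLa
  have hVa : BGaux.Valid b La := BGaux.valid_of_chain La b hachain halen halast hane
  -- t₀ ≥ 1
  have ht0 : 1 ≤ expShiftDown b La := by
    obtain ⟨l, T, rfl⟩ : ∃ l T, La = l :: T := by
      cases La with
      | nil => exact absurd rfl hane
      | cons l T => exact ⟨l, T, rfl⟩
    have hl : b ≤ l := hVa.head_le
    rw [BGaux.expShiftDown_cons]
    have : 0 < (l - 1).choose (b - 1) := Nat.choose_pos (by omega)
    omega
  obtain ⟨Lt, hLt⟩ := BGaux.exists_expansion (b - 1) (expShiftDown b La) (by omega) ht0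
  obtain ⟨htne, htlen, htchain, htlast, htval⟩ := hLt
  have hVt : BGaux.Valid (b - 1) Lt := BGaux.valid_of_chain Lt (b - 1) htchain htlen htlast htne
  constructor
  · -- membership: a ≤ expShiftUp (b-1) Lt
    refine ⟨Lt, ⟨htne, htlen, htchain, htlast, htval⟩, ?_⟩
    by_contra hc
    push_neg at hc
    set M := Lt.map (· + 1) ++ [b - 1 + 1 - Lt.length] with hM
    have hVM : BGaux.Valid (b - 1 + 1) M := hVt.map_succ_append
    have hvM : expValue (b - 1 + 1) M = expShiftUp (b - 1) Lt + 1 := by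
      rw [hM, BGaux.expValue_append, BGaux.expValue_map_succ Lt (b - 1)
        (hVt.length_le.trans (by omega)), List.length_map, Nat.choose_self]
    have hdM : expShiftDown (b - 1 + 1) M = expShiftDown b La + 1 := by
      rw [hM, BGaux.expShiftDown_append, BGaux.expShiftDown_map_succ Lt (b - 1)
        (hVt.length_le.trans (by omega)), List.length_map, htval, Nat.choose_self]
    rw [hb1] at hVM hvM hdM
    have hmono := BGaux.down_mono M La b hVM hVa (by omega)
    omega
  · -- lower bound
    rintro t ⟨Lt', ⟨hne', hlen', hchain', hlast', hval'⟩, hle'⟩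
    have hVt' : BGaux.Valid (b - 1) Lt' := BGaux.valid_of_chain Lt' (b - 1) hchain' hlen' hlast' hne'
    have hVM : BGaux.Valid b (Lt'.map (· + 1)) := by
      have := hVt'.map_succ
      rwa [hb1] at this
    have hvM : expValue b (Lt'.map (· + 1)) = expShiftUp (b - 1) Lt' := by
      have := BGaux.expValue_map_succ Lt' (b - 1) (hVt'.length_le.trans (by omega))
      rwa [hb1] at this
    have hdM : expShiftDown b (Lt'.map (· + 1)) = t := by
      have := BGaux.expShiftDown_map_succ Lt' (b - 1) (hVt'.length_le.trans (by omega))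
      rw [hb1] at this
      rw [this, hval']
    have hmono := BGaux.down_mono La (Lt'.map (· + 1)) b hVa hVM (by omega)
    omega
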